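/- Let ℰ be a local Dirichlet form with energy measures σ_{ij}^{(φ₁,…,φ_n)} satisfying ℰ(F₀(φ₁,…,φ_n), G₀(φ₁,…,φ_n)) = Σ_{i,j} ∫ dσ_{ij} (∂F/∂x_i)(∂G/∂x_j) for F,G ∈ C¹(ℝⁿ), F₀ = F − F(0), G₀ = G − G(0). Then for all ψ, φ ∈ D(ℰ) ∩ L_∞(X;ℝ): ℰ(φ,φ) − ℰ(e^{−ψ}φ, e^{ψ}φ) = ℐ_ψ(φ²) where ℐ_ψ(φ²) = ℰ(ψφ²,ψ) − 2^{-1}ℰ(ψ²,φ²). -/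

import Mathlib

/-- The `i`-th partial derivative of a `C¹` function on `ℝ²`. -/
noncomputable def partialDeriv2 (i : Fin 2) (F : ℝ × ℝ → ℝ) (p : ℝ × ℝ) : ℝ :=
  fderiv ℝ F p (if i = 0 then ((1 : ℝ), (0 : ℝ)) else ((0 : ℝ), (1 : ℝ)))

private lemma pd_eq {F : ℝ × ℝ → ℝ} {L : ℝ × ℝ →L[ℝ] ℝ} {p : ℝ × ℝ}
    (h : HasFDerivAt F L p) (i : Fin 2) :
    partialDeriv2 i F p = L (if i = 0 then ((1:ℝ), (0:ℝ)) else ((0:ℝ), (1:ℝ))) := by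
  rw [partialDeriv2, h.fderiv]

private lemma hfst (p : ℝ × ℝ) :
    HasFDerivAt (fun q : ℝ × ℝ => q.1) (ContinuousLinearMap.fst ℝ ℝ ℝ) p :=
  hasFDerivAt_fst

private lemma hsnd (p : ℝ × ℝ) :
    HasFDerivAt (fun q : ℝ × ℝ => q.2) (ContinuousLinearMap.snd ℝ ℝ ℝ) p :=
  hasFDerivAt_snd

private lemma pd0_snd (p : ℝ × ℝ) : partialDeriv2 0 (fun q : ℝ × ℝ => q.2) p = 0 := by
  rw [pd_eq (hsnd p)]; simp

private lemma pd1_snd (p : ℝ × ℝ) : partialDeriv2 1 (fun q : ℝ × ℝ => q.2) p = 1 := by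
  rw [pd_eq (hsnd p)]; simp

private lemma pd0_fst (p : ℝ × ℝ) : partialDeriv2 0 (fun q : ℝ × ℝ => q.1) p = 1 := by
  rw [pd_eq (hfst p)]; simp

private lemma pd1_fst (p : ℝ × ℝ) : partialDeriv2 1 (fun q : ℝ × ℝ => q.1) p = 0 := by
  rw [pd_eq (hfst p)]; simp

private lemma pd0_en (p : ℝ × ℝ) :
    partialDeriv2 0 (fun q : ℝ × ℝ => Real.exp (-q.1) * q.2) p
      = -(Real.exp (-p.1) * p.2) := by
  erw [pd_eq (((hfst p).neg.exp).mul (hsnd p))]; simp; ring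

private lemma pd1_en (p : ℝ × ℝ) :
    partialDeriv2 1 (fun q : ℝ × ℝ => Real.exp (-q.1) * q.2) p = Real.exp (-p.1) := by
  erw [pd_eq (((hfst p).neg.exp).mul (hsnd p))]; simp

private lemma pd0_ep (p : ℝ × ℝ) :
    partialDeriv2 0 (fun q : ℝ × ℝ => Real.exp q.1 * q.2) p
      = Real.exp p.1 * p.2 := by
  erw [pd_eq (((hfst p).exp).mul (hsnd p))]; simp; ring

private lemma pd1_ep (p : ℝ × ℝ) :
    partialDeriv2 1 (fun q : ℝ × ℝ => Real.exp q.1 * q.2) p = Real.exp p.1 := by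
  erw [pd_eq (((hfst p).exp).mul (hsnd p))]; simp

private lemma exy2 : (fun q : ℝ × ℝ => q.1 * q.2 ^ 2) = fun q : ℝ × ℝ => q.1 * (q.2 * q.2) := by
  funext q; ring

private lemma pd0_xy2 (p : ℝ × ℝ) :
    partialDeriv2 0 (fun q : ℝ × ℝ => q.1 * q.2 ^ 2) p = p.2 ^ 2 := by
  erw [exy2, pd_eq ((hfst p).mul ((hsnd p).mul (hsnd p)))]; simp; ring

private lemma pd1_xy2 (p : ℝ × ℝ) :
    partialDeriv2 1 (fun q : ℝ × ℝ => q.1 * q.2 ^ 2) p = 2 * (p.1 * p.2) := by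
  erw [exy2, pd_eq ((hfst p).mul ((hsnd p).mul (hsnd p)))]; simp; ring

private lemma ex2 : (fun q : ℝ × ℝ => q.1 ^ 2) = fun q : ℝ × ℝ => q.1 * q.1 := by
  funext q; ring

private lemma ey2 : (fun q : ℝ × ℝ => q.2 ^ 2) = fun q : ℝ × ℝ => q.2 * q.2 := by
  funext q; ring

private lemma pd0_x2 (p : ℝ × ℝ) :
    partialDeriv2 0 (fun q : ℝ × ℝ => q.1 ^ 2) p = 2 * p.1 := by
  erw [ex2, pd_eq ((hfst p).mul (hfst p))]; simp; ring

private lemma pd1_x2 (p : ℝ × ℝ) :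
    partialDeriv2 1 (fun q : ℝ × ℝ => q.1 ^ 2) p = 0 := by
  erw [ex2, pd_eq ((hfst p).mul (hfst p))]; simp

private lemma pd0_y2 (p : ℝ × ℝ) :
    partialDeriv2 0 (fun q : ℝ × ℝ => q.2 ^ 2) p = 0 := by
  erw [ey2, pd_eq ((hsnd p).mul (hsnd p))]; simp

private lemma pd1_y2 (p : ℝ × ℝ) :
    partialDeriv2 1 (fun q : ℝ × ℝ => q.2 ^ 2) p = 2 * p.2 := by
  erw [ey2, pd_eq ((hsnd p).mul (hsnd p))]; simp; ring

theorem energy_exp_perturbation {X : Type*}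
    (E : (X → ℝ) → (X → ℝ) → ℝ) (ψ φ : X → ℝ)
    (hψb : ∃ M, ∀ x, |ψ x| ≤ M) (hφb : ∃ M, ∀ x, |φ x| ≤ M)
    (σ : Fin 2 → Fin 2 → ((ℝ × ℝ) → ℝ) → ℝ)
    (hσadd : ∀ i j f g, σ i j (f + g) = σ i j f + σ i j g)
    (hσsmul : ∀ i j (c : ℝ) f, σ i j (c • f) = c * σ i j f)
    (hσsymm : ∀ f, σ 0 1 f = σ 1 0 f)
    (hrep : ∀ F G : ℝ × ℝ → ℝ, ContDiff ℝ 1 F → ContDiff ℝ 1 G →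
      E (fun x => F (ψ x, φ x) - F (0, 0)) (fun x => G (ψ x, φ x) - G (0, 0))
        = ∑ i : Fin 2, ∑ j : Fin 2,
            σ i j (fun p => partialDeriv2 i F p * partialDeriv2 j G p)) :
    E φ φ - E (fun x => Real.exp (-ψ x) * φ x) (fun x => Real.exp (ψ x) * φ x)
      = E (fun x => ψ x * φ x ^ 2) ψ
        - 2⁻¹ * E (fun x => ψ x ^ 2) (fun x => φ x ^ 2) := by
  -- linearity consequences
  have hσzero : ∀ i j, σ i j (fun _ => (0:ℝ)) = 0 := by
    intro i j
    have := hσsmul i j 0 (fun _ => (0:ℝ))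
    rw [zero_smul, zero_mul] at this; exact this
  have hσc : ∀ i j (c : ℝ) (f : (ℝ × ℝ) → ℝ),
      σ i j (fun p => c * f p) = c * σ i j f := by
    intro i j c f
    have := hσsmul i j c f
    simpa [Pi.smul_def, smul_eq_mul] using this
  -- C¹ proofs
  have cφ : ContDiff ℝ 1 (fun q : ℝ × ℝ => q.2) := contDiff_snd
  have cψ : ContDiff ℝ 1 (fun q : ℝ × ℝ => q.1) := contDiff_fst
  have cen : ContDiff ℝ 1 (fun q : ℝ × ℝ => Real.exp (-q.1) * q.2) :=
    (Real.contDiff_exp.comp contDiff_fst.neg).mul contDiff_snd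
  have cep : ContDiff ℝ 1 (fun q : ℝ × ℝ => Real.exp q.1 * q.2) :=
    (Real.contDiff_exp.comp contDiff_fst).mul contDiff_snd
  have cxy2 : ContDiff ℝ 1 (fun q : ℝ × ℝ => q.1 * q.2 ^ 2) :=
    contDiff_fst.mul (contDiff_snd.pow 2)
  have cx2 : ContDiff ℝ 1 (fun q : ℝ × ℝ => q.1 ^ 2) := contDiff_fst.pow 2
  have cy2 : ContDiff ℝ 1 (fun q : ℝ × ℝ => q.2 ^ 2) := contDiff_snd.pow 2
  -- 1) E φ φ
  have h1 := hrep _ _ cφ cφ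
  simp only [Fin.sum_univ_two, sub_zero] at h1
  rw [show (fun p : ℝ × ℝ => partialDeriv2 0 (fun q : ℝ × ℝ => q.2) p *
        partialDeriv2 0 (fun q : ℝ × ℝ => q.2) p) = fun _ => (0:ℝ) from
      funext fun p => by rw [pd0_snd]; ring,
    show (fun p : ℝ × ℝ => partialDeriv2 0 (fun q : ℝ × ℝ => q.2) p *
        partialDeriv2 1 (fun q : ℝ × ℝ => q.2) p) = fun _ => (0:ℝ) from
      funext fun p => by rw [pd0_snd]; ring,
    show (fun p : ℝ × ℝ => partialDeriv2 1 (fun q : ℝ × ℝ => q.2) p *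
        partialDeriv2 0 (fun q : ℝ × ℝ => q.2) p) = fun _ => (0:ℝ) from
      funext fun p => by rw [pd0_snd]; ring,
    show (fun p : ℝ × ℝ => partialDeriv2 1 (fun q : ℝ × ℝ => q.2) p *
        partialDeriv2 1 (fun q : ℝ × ℝ => q.2) p) = fun _ => (1:ℝ) from
      funext fun p => by rw [pd1_snd]; ring,
    hσzero, hσzero, hσzero] at h1
  -- 2) E (e^{-ψ}φ) (e^{ψ}φ)
  have h2 := hrep _ _ cen cep
  simp only [Fin.sum_univ_two, neg_zero, Real.exp_zero, mul_zero, one_mul, sub_zero] at h2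
  rw [show (fun p : ℝ × ℝ => partialDeriv2 0 (fun q : ℝ × ℝ => Real.exp (-q.1) * q.2) p *
        partialDeriv2 0 (fun q : ℝ × ℝ => Real.exp q.1 * q.2) p)
        = fun p : ℝ × ℝ => (-1 : ℝ) * p.2 ^ 2 from
      funext fun p => by
        rw [pd0_en, pd0_ep]
        have h : Real.exp (-p.1) * Real.exp p.1 = 1 := by
          rw [← Real.exp_add]; simp
        linear_combination (-p.2 ^ 2) * h,
    show (fun p : ℝ × ℝ => partialDeriv2 0 (fun q : ℝ × ℝ => Real.exp (-q.1) * q.2) p *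
        partialDeriv2 1 (fun q : ℝ × ℝ => Real.exp q.1 * q.2) p)
        = fun p : ℝ × ℝ => (-1 : ℝ) * p.2 from
      funext fun p => by
        rw [pd0_en, pd1_ep]
        have h : Real.exp (-p.1) * Real.exp p.1 = 1 := by
          rw [← Real.exp_add]; simp
        linear_combination (-p.2) * h,
    show (fun p : ℝ × ℝ => partialDeriv2 1 (fun q : ℝ × ℝ => Real.exp (-q.1) * q.2) p *
        partialDeriv2 0 (fun q : ℝ × ℝ => Real.exp q.1 * q.2) p)
        = fun p : ℝ × ℝ => (1 : ℝ) * p.2 from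
      funext fun p => by
        rw [pd1_en, pd0_ep]
        have h : Real.exp (-p.1) * Real.exp p.1 = 1 := by
          rw [← Real.exp_add]; simp
        linear_combination p.2 * h,
    show (fun p : ℝ × ℝ => partialDeriv2 1 (fun q : ℝ × ℝ => Real.exp (-q.1) * q.2) p *
        partialDeriv2 1 (fun q : ℝ × ℝ => Real.exp q.1 * q.2) p)
        = fun _ : ℝ × ℝ => (1 : ℝ) from
      funext fun p => by
        rw [pd1_en, pd1_ep, ← Real.exp_add]; simp,
    hσc, hσc, hσc] at h2
  -- 3) E (ψφ²) ψ
  have h3 := hrep _ _ cxy2 cψ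
  simp only [Fin.sum_univ_two, zero_mul, mul_zero, zero_pow, sub_zero, ne_eq,
    OfNat.ofNat_ne_zero, not_false_eq_true] at h3
  rw [show (fun p : ℝ × ℝ => partialDeriv2 0 (fun q : ℝ × ℝ => q.1 * q.2 ^ 2) p *
        partialDeriv2 0 (fun q : ℝ × ℝ => q.1) p) = fun p : ℝ × ℝ => p.2 ^ 2 from
      funext fun p => by rw [pd0_xy2, pd0_fst]; ring,
    show (fun p : ℝ × ℝ => partialDeriv2 0 (fun q : ℝ × ℝ => q.1 * q.2 ^ 2) p *
        partialDeriv2 1 (fun q : ℝ × ℝ => q.1) p) = fun _ => (0:ℝ) from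
      funext fun p => by rw [pd1_fst]; ring,
    show (fun p : ℝ × ℝ => partialDeriv2 1 (fun q : ℝ × ℝ => q.1 * q.2 ^ 2) p *
        partialDeriv2 0 (fun q : ℝ × ℝ => q.1) p)
        = fun p : ℝ × ℝ => (2:ℝ) * (p.1 * p.2) from
      funext fun p => by rw [pd1_xy2, pd0_fst]; ring,
    show (fun p : ℝ × ℝ => partialDeriv2 1 (fun q : ℝ × ℝ => q.1 * q.2 ^ 2) p *
        partialDeriv2 1 (fun q : ℝ × ℝ => q.1) p) = fun _ => (0:ℝ) from
      funext fun p => by rw [pd1_fst]; ring,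
    hσzero, hσzero, hσc] at h3
  -- 4) E (ψ²) (φ²)
  have h4 := hrep _ _ cx2 cy2
  simp only [Fin.sum_univ_two, zero_pow, sub_zero, ne_eq,
    OfNat.ofNat_ne_zero, not_false_eq_true] at h4
  rw [show (fun p : ℝ × ℝ => partialDeriv2 0 (fun q : ℝ × ℝ => q.1 ^ 2) p *
        partialDeriv2 0 (fun q : ℝ × ℝ => q.2 ^ 2) p) = fun _ => (0:ℝ) from
      funext fun p => by rw [pd0_y2]; ring,
    show (fun p : ℝ × ℝ => partialDeriv2 0 (fun q : ℝ × ℝ => q.1 ^ 2) p *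
        partialDeriv2 1 (fun q : ℝ × ℝ => q.2 ^ 2) p)
        = fun p : ℝ × ℝ => (4:ℝ) * (p.1 * p.2) from
      funext fun p => by rw [pd0_x2, pd1_y2]; ring,
    show (fun p : ℝ × ℝ => partialDeriv2 1 (fun q : ℝ × ℝ => q.1 ^ 2) p *
        partialDeriv2 0 (fun q : ℝ × ℝ => q.2 ^ 2) p) = fun _ => (0:ℝ) from
      funext fun p => by rw [pd1_x2]; ring,
    show (fun p : ℝ × ℝ => partialDeriv2 1 (fun q : ℝ × ℝ => q.1 ^ 2) p *
        partialDeriv2 1 (fun q : ℝ × ℝ => q.2 ^ 2) p) = fun _ => (0:ℝ) from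
      funext fun p => by rw [pd1_x2]; ring,
    hσzero, hσzero, hσzero, hσc] at h4
  rw [h1, h2, h3, h4, hσsymm (fun p : ℝ × ℝ => p.2), hσsymm (fun p : ℝ × ℝ => p.1 * p.2)]
  have e : σ 1 0 Prod.snd = σ 1 0 (fun p : ℝ × ℝ => p.2) := rfl
  rw [e]
  ring
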